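/- Let (Y_n)_{n≥1} be nonnegative random variables all having the same distribution as a fixed nonnegative random variable Y_0 with P(Y_0 > 0) > 0. Then P(Σ_{n≥1} Y_n = +∞) ≥ P(Y_0 > 0) > 0. -/

import Mathlib

open MeasureTheory Filter Set Topology

noncomputable section

/-- Jeulin-type lemma: identically distributed nonnegative random variables whose common law
charges `(0,∞)` have a divergent series with probability at least `P(Y₀ > 0) > 0`. -/
theorem divergence_of_identically_distributed {Ω : Type*} [MeasurableSpace Ω]
    (P : Measure Ω) [IsProbabilityMeasure P]
    (Y : ℕ → Ω → ℝ) (Y₀ : Ω → ℝ)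
    (hmeas : ∀ n, Measurable (Y n)) (hmeas₀ : Measurable Y₀)
    (hpos : ∀ n ω, 0 ≤ Y n ω) (hpos₀ : ∀ ω, 0 ≤ Y₀ ω)
    (hid : ∀ n, P.map (Y n) = P.map Y₀)
    (h0 : 0 < P {ω | 0 < Y₀ ω}) :
    P {ω | 0 < Y₀ ω} ≤ P {ω | ∑' n : ℕ, ENNReal.ofReal (Y n ω) = ⊤} ∧
    0 < P {ω | ∑' n : ℕ, ENNReal.ofReal (Y n ω) = ⊤} := by
  set S : Ω → ENNReal := fun ω => ∑' n : ℕ, ENNReal.ofReal (Y n ω) with hSdef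
  have hSmeas : Measurable S :=
    Measurable.ennreal_tsum fun n => (hmeas n).ennreal_ofReal
  have hAmeas : MeasurableSet {ω | S ω = ⊤} := hSmeas (measurableSet_singleton ⊤)
  have key : ∀ ε : ℝ, 0 < ε → P {ω | ε < Y₀ ω} ≤ P {ω | S ω = ⊤} := by
    intro ε hε
    set D : ℕ → Set Ω :=
      fun n => {ω | S ω = ⊤}ᶜ ∩ ⋃ m, ⋃ (_ : n ≤ m), {ω | ε < Y m ω} with hDdef
    have hDmeas : ∀ n, MeasurableSet (D n) := fun n =>
      hAmeas.compl.inter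
        (MeasurableSet.iUnion fun m => MeasurableSet.iUnion fun _ =>
          measurableSet_lt measurable_const (hmeas m))
    have hDanti : Antitone D := by
      intro a b hab
      refine inter_subset_inter_right _ ?_
      refine iUnion_mono fun m => ?_
      exact iUnion_subset fun h => subset_iUnion_of_subset (hab.trans h) (subset_refl _)
    have hDinter : ⋂ n, D n = ∅ := by
      rw [eq_empty_iff_forall_notMem]
      intro ω hω
      have h := fun n => mem_iInter.mp hω n
      have hSne : S ω ≠ ⊤ := (h 0).1
      have htend : Tendsto (fun n => ENNReal.ofReal (Y n ω)) atTop (𝓝 0) :=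
        ENNReal.tendsto_atTop_zero_of_tsum_ne_top hSne
      have hevent : ∀ᶠ n in atTop, ENNReal.ofReal (Y n ω) < ENNReal.ofReal ε :=
        htend.eventually_lt_const (ENNReal.ofReal_pos.mpr hε)
      obtain ⟨N, hN⟩ := eventually_atTop.mp hevent
      obtain ⟨m, hm⟩ := mem_iUnion.mp (h N).2
      obtain ⟨hNm, hYm⟩ := mem_iUnion.mp hm
      have hYm' : ε < Y m ω := hYm
      exact absurd (hN m hNm) (not_lt.mpr (ENNReal.ofReal_le_ofReal hYm'.le))
    have htend0 : Tendsto (fun n => P (D n)) atTop (𝓝 0) := by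
      have h := tendsto_measure_iInter_atTop (μ := P)
        (fun n => (hDmeas n).nullMeasurableSet) hDanti ⟨0, measure_ne_top _ _⟩
      rw [hDinter, measure_empty] at h
      exact h
    have hbound : ∀ n : ℕ, P {ω | ε < Y₀ ω} ≤ P (D n) + P {ω | S ω = ⊤} := by
      intro n
      have heq : P {ω | ε < Y n ω} = P {ω | ε < Y₀ ω} := by
        have h1 : P {ω | ε < Y n ω} = P.map (Y n) (Ioi ε) := by
          rw [Measure.map_apply (hmeas n) measurableSet_Ioi]; rfl
        have h2 : P {ω | ε < Y₀ ω} = P.map Y₀ (Ioi ε) := by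
          rw [Measure.map_apply hmeas₀ measurableSet_Ioi]; rfl
        rw [h1, h2, hid n]
      have hsub : {ω | ε < Y n ω} ⊆ D n ∪ {ω | S ω = ⊤} := by
        intro ω hω
        by_cases hS : S ω = ⊤
        · exact Or.inr hS
        · exact Or.inl ⟨hS, mem_iUnion.mpr ⟨n, mem_iUnion.mpr ⟨le_refl n, hω⟩⟩⟩
      calc P {ω | ε < Y₀ ω} = P {ω | ε < Y n ω} := heq.symm
        _ ≤ P (D n ∪ {ω | S ω = ⊤}) := measure_mono hsub
        _ ≤ P (D n) + P {ω | S ω = ⊤} := measure_union_le _ _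
    have hlim : Tendsto (fun n => P (D n) + P {ω | S ω = ⊤}) atTop
        (𝓝 (0 + P {ω | S ω = ⊤})) := htend0.add_const _
    have := ge_of_tendsto' hlim hbound
    rwa [zero_add] at this
  have hU : {ω | 0 < Y₀ ω} = ⋃ k : ℕ, {ω | (1:ℝ)/(k+1) < Y₀ ω} := by
    ext ω
    simp only [mem_setOf_eq, mem_iUnion]
    constructor
    · intro h
      obtain ⟨k, hk⟩ := exists_nat_one_div_lt h
      exact ⟨k, by exact_mod_cast hk⟩
    · rintro ⟨k, hk⟩
      exact lt_trans (by positivity) hk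
  have hmono : Monotone fun k : ℕ => {ω | (1:ℝ)/(k+1) < Y₀ ω} := by
    intro a b hab ω hω
    simp only [mem_setOf_eq] at hω ⊢
    refine lt_of_le_of_lt ?_ hω
    apply one_div_le_one_div_of_le
    · positivity
    · exact_mod_cast by simpa using Nat.succ_le_succ hab
  have hfinal : P {ω | 0 < Y₀ ω} ≤ P {ω | S ω = ⊤} := by
    rw [hU, hmono.directed_le.measure_iUnion]
    exact iSup_le fun k => key _ (by positivity)
  exact ⟨hfinal, lt_of_lt_of_le h0 hfinal⟩
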